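/- If G is a connected graph of order n and diameter D, and H is obtained from G by deleting a single edge uv such that H remains connected, then μ(G) − μ(H) > 2/(μ(G)^{2D} · n). -/

import Mathlib

open Classical in
noncomputable def adjMat {V : Type*} [Fintype V] (G : SimpleGraph V) :
    Matrix V V ℝ :=
  Matrix.of fun i j => if G.Adj i j then 1 else 0

def IsAdjEigenvalue {V : Type*} [Fintype V] (A : Matrix V V ℝ) (μ : ℝ) : Prop :=
  ∃ x : V → ℝ, x ≠ 0 ∧ A.mulVec x = μ • x

def IsMaxAdjEigenvalue {V : Type*} [Fintype V] (A : Matrix V V ℝ) (μ : ℝ) : Prop :=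
  IsAdjEigenvalue A μ ∧ ∀ ν, IsAdjEigenvalue A ν → ν ≤ μ

def IsMinAdjEigenvalue {V : Type*} [Fintype V] (A : Matrix V V ℝ) (μ : ℝ) : Prop :=
  IsAdjEigenvalue A μ ∧ ∀ ν, IsAdjEigenvalue A ν → μ ≤ ν

section Comb

open SimpleGraph

variable {V : Type*}

lemma dist_getVert_le {G : SimpleGraph V} (hG : G.Connected) :
    ∀ {a b : V} (W : G.Walk a b) (k : ℕ),
      G.dist a (W.getVert k) ≤ k ∧ G.dist (W.getVert k) b ≤ W.length - k := by
  intro a b W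
  induction W with
  | nil =>
    intro k
    rw [SimpleGraph.Walk.getVert_of_length_le _ (by simp)]
    simp [SimpleGraph.dist_self]
  | @cons a c b h p ih =>
    intro k
    cases k with
    | zero =>
      refine ⟨by simp [SimpleGraph.dist_self], ?_⟩
      simpa using SimpleGraph.dist_le (SimpleGraph.Walk.cons h p)
    | succ k =>
      rw [SimpleGraph.Walk.getVert_cons_succ]
      obtain ⟨h1, h2⟩ := ih k
      constructor
      · calc G.dist a (p.getVert k) ≤ G.dist a c + G.dist c (p.getVert k) := hG.dist_triangle
          _ ≤ 1 + k := by
            have : G.dist a c ≤ 1 := by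
              simpa using SimpleGraph.dist_le (SimpleGraph.Walk.cons h SimpleGraph.Walk.nil)
            omega
          _ = k + 1 := by omega
      · simpa [SimpleGraph.Walk.length_cons, Nat.succ_sub_succ] using h2

lemma walk_split {G : SimpleGraph V} {u v : V} (hH : (G.deleteEdges {s(u,v)}).Connected) :
    ∀ {a b : V} (W : G.Walk a b),
      (G.deleteEdges {s(u,v)}).dist a b ≤ W.length ∨
      (G.deleteEdges {s(u,v)}).dist a u + 1 + (G.deleteEdges {s(u,v)}).dist v b ≤ W.length ∨
      (G.deleteEdges {s(u,v)}).dist a v + 1 + (G.deleteEdges {s(u,v)}).dist u b ≤ W.length := by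
  intro a b W
  induction W with
  | nil => left; simp [SimpleGraph.dist_self]
  | @cons a c b h p ih =>
    rw [SimpleGraph.Walk.length_cons]
    by_cases hs : s(a,c) = s(u,v)
    · rw [Sym2.eq_iff] at hs
      rcases hs with ⟨ha, hc⟩ | ⟨ha, hc⟩
      · subst ha; subst hc
        rcases ih with h1 | h2 | h3
        · right; left; simp [SimpleGraph.dist_self]; omega
        · right; left
          simp [SimpleGraph.dist_self]
          omega
        · left
          simp [SimpleGraph.dist_self] at h3
          omega
      · subst ha; subst hc
        rcases ih with h1 | h2 | h3
        · right; right; simp [SimpleGraph.dist_self]; omega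
        · left
          simp [SimpleGraph.dist_self] at h2
          omega
        · right; right
          simp [SimpleGraph.dist_self]
          omega
    · have hadj : (G.deleteEdges {s(u,v)}).Adj a c := by
        rw [SimpleGraph.deleteEdges_adj]
        exact ⟨h, by simpa using hs⟩
      have hac : (G.deleteEdges {s(u,v)}).dist a c ≤ 1 := by
        simpa using SimpleGraph.dist_le (SimpleGraph.Walk.cons hadj SimpleGraph.Walk.nil)
      rcases ih with h1 | h2 | h3
      · left
        have := hH.dist_triangle (u := a) (v := c) (w := b)
        omega
      · right; left
        have := hH.dist_triangle (u := a) (v := c) (w := u)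
        omega
      · right; right
        have := hH.dist_triangle (u := a) (v := c) (w := v)
        omega

lemma dist_sum_core {G : SimpleGraph V} (hG : G.Connected) {u v : V} {D : ℕ}
    (hD1 : ∀ a b, G.dist a b ≤ D) (hH : (G.deleteEdges {s(u,v)}).Connected) (w : V)
    (hst : (G.deleteEdges {s(u,v)}).dist w u ≤ (G.deleteEdges {s(u,v)}).dist w v) :
    (G.deleteEdges {s(u,v)}).dist w u + (G.deleteEdges {s(u,v)}).dist w v ≤ 2 * D := by
  by_contra hc
  push_neg at hc
  obtain ⟨W, hW⟩ := (hH.preconnected w v).exists_walk_length_eq_dist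
  obtain ⟨hwx, hxv⟩ := dist_getVert_le hH W (D+1)
  rw [hW] at hxv
  have htri : (G.deleteEdges {s(u,v)}).dist w v ≤
      (G.deleteEdges {s(u,v)}).dist w (W.getVert (D+1)) +
      (G.deleteEdges {s(u,v)}).dist (W.getVert (D+1)) v := hH.dist_triangle
  obtain ⟨P, hP⟩ := (hG.preconnected w (W.getVert (D+1))).exists_walk_length_eq_dist
  have hPD : P.length ≤ D := by rw [hP]; exact hD1 w _
  have hcomm : (G.deleteEdges {s(u,v)}).dist v (W.getVert (D+1)) =
      (G.deleteEdges {s(u,v)}).dist (W.getVert (D+1)) v := SimpleGraph.dist_comm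
  rcases walk_split hH P with h1 | h2 | h3
  · omega
  · omega
  · omega

lemma dist_sum_le {G : SimpleGraph V} (hG : G.Connected) {u v : V} {D : ℕ}
    (hD1 : ∀ a b, G.dist a b ≤ D) (hH : (G.deleteEdges {s(u,v)}).Connected) (w : V) :
    (G.deleteEdges {s(u,v)}).dist w u + (G.deleteEdges {s(u,v)}).dist w v ≤ 2 * D := by
  by_cases hle : (G.deleteEdges {s(u,v)}).dist w u ≤ (G.deleteEdges {s(u,v)}).dist w v
  · exact dist_sum_core hG hD1 hH w hle
  · have hswap : s(v,u) = s(u,v) := Sym2.eq_swap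
    have hH' : (G.deleteEdges {s(v,u)}).Connected := by rwa [hswap]
    have := dist_sum_core hG hD1 hH' w (by rw [hswap]; omega)
    rw [hswap] at this
    omega

end Comb
open Matrix
variable {n : ℕ}

local notation "E" => EuclideanSpace ℝ (Fin n)

lemma inner_symm_eq (M : Matrix (Fin n) (Fin n) ℝ) (x : Fin n → ℝ) :
    (inner ℝ ((Matrix.toEuclideanLin M) ((WithLp.equiv 2 (Fin n → ℝ)).symm x))
      ((WithLp.equiv 2 (Fin n → ℝ)).symm x) : ℝ) = M.mulVec x ⬝ᵥ x := by
  rw [WithLp.equiv_symm_apply, Matrix.toEuclideanLin_apply_piLp_toLp]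
  rw [PiLp.inner_apply]
  simp [dotProduct, mul_comm]

lemma norm_symm_sq (x : Fin n → ℝ) :
    ‖(WithLp.equiv 2 (Fin n → ℝ)).symm x‖ ^ 2 = x ⬝ᵥ x := by
  rw [EuclideanSpace.norm_eq]
  rw [Real.sq_sqrt (by positivity)]
  simp [dotProduct, Real.norm_eq_abs, sq_abs, sq]

lemma eig_of_euclid {M : Matrix (Fin n) (Fin n) ℝ} {ν : ℝ}
    (h : Module.End.HasEigenvalue (Matrix.toEuclideanLin M) ν) :
    IsAdjEigenvalue M ν := by
  obtain ⟨z, hz, hz0⟩ := h.exists_hasEigenvector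
  refine ⟨(WithLp.equiv 2 (Fin n → ℝ)) z, ?_, ?_⟩
  · intro h0
    apply hz0
    have : (WithLp.equiv 2 (Fin n → ℝ)).symm ((WithLp.equiv 2 (Fin n → ℝ)) z) =
        (WithLp.equiv 2 (Fin n → ℝ)).symm 0 := by rw [h0]
    simpa using this
  · have heq : (Matrix.toEuclideanLin M) z = ν • z := by
      rwa [Module.End.mem_eigenspace_iff] at hz
    have := congrArg (WithLp.equiv 2 (Fin n → ℝ)) heq
    rw [WithLp.equiv_apply, Matrix.ofLp_toEuclideanLin_apply] at this
    rw [WithLp.equiv_apply, this, WithLp.equiv_apply, WithLp.ofLp_smul]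

lemma rayleigh_le (hn : 0 < n) (M : Matrix (Fin n) (Fin n) ℝ) (hM : M.IsHermitian)
    {μ : ℝ} (hmax : IsMaxAdjEigenvalue M μ) (x : Fin n → ℝ) :
    M.mulVec x ⬝ᵥ x ≤ μ * (x ⬝ᵥ x) := by
  haveI : Nonempty (Fin n) := ⟨⟨0, hn⟩⟩
  haveI : Nontrivial E := inferInstance
  set T := Matrix.toEuclideanLin M with hT
  have hsym : T.IsSymmetric := Matrix.isHermitian_iff_isSymmetric.mp hM
  set ν : ℝ := ⨆ z : { z : E // z ≠ 0 },
      RCLike.re (inner ℝ (T z) (z : E) : ℝ) / ‖(z : E)‖ ^ 2 with hν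
  have hev : Module.End.HasEigenvalue T ν := by
    have := hsym.hasEigenvalue_iSup_of_finiteDimensional
    exact this
  have hνμ : ν ≤ μ := hmax.2 ν (eig_of_euclid hev)
  rcases eq_or_ne x 0 with rfl | hx
  · simp
  · set x' : E := (WithLp.equiv 2 (Fin n → ℝ)).symm x with hx'
    have hx'0 : x' ≠ 0 := by
      intro h0
      apply hx
      have := congrArg (WithLp.equiv 2 (Fin n → ℝ)) h0
      simpa [hx'] using this
    -- bounded above
    set T' : E →L[ℝ] E := LinearMap.toContinuousLinearMap T with hT'
    have hbdd : BddAbove (Set.range fun z : { z : E // z ≠ 0 } =>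
        RCLike.re (inner ℝ (T z) (z : E) : ℝ) / ‖(z : E)‖ ^ 2) := by
      refine ⟨‖T'‖, ?_⟩
      rintro r ⟨z, rfl⟩
      have hz : (0:ℝ) < ‖(z:E)‖ := norm_pos_iff.mpr z.2
      rw [div_le_iff₀ (by positivity)]
      have h1 : (inner ℝ (T z) (z : E) : ℝ) ≤ ‖T' (z:E)‖ * ‖(z:E)‖ := by
        calc (inner ℝ (T z) (z : E) : ℝ) ≤ ‖T (z:E)‖ * ‖(z:E)‖ := real_inner_le_norm _ _
          _ = ‖T' (z:E)‖ * ‖(z:E)‖ := by rw [hT', LinearMap.coe_toContinuousLinearMap']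
      have h2 : ‖T' (z:E)‖ ≤ ‖T'‖ * ‖(z:E)‖ := T'.le_opNorm _
      have := mul_le_mul_of_nonneg_right h2 (le_of_lt hz)
      simp only [RCLike.re_to_real]
      nlinarith
    have hle : RCLike.re (inner ℝ (T x') (x' : E) : ℝ) / ‖x'‖ ^ 2 ≤ ν := by
      exact le_ciSup hbdd ⟨x', hx'0⟩
    have hinner : (inner ℝ (T x') x' : ℝ) = M.mulVec x ⬝ᵥ x := inner_symm_eq M x
    have hnorm : ‖x'‖ ^ 2 = x ⬝ᵥ x := norm_symm_sq x
    have hxx : (0:ℝ) < x ⬝ᵥ x := by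
      rw [← hnorm]
      have : (0:ℝ) < ‖x'‖ := norm_pos_iff.mpr hx'0
      positivity
    rw [RCLike.re_to_real, hinner, hnorm, div_le_iff₀ hxx] at hle
    nlinarith

lemma inner_eq' (M : Matrix (Fin n) (Fin n) ℝ) (w : EuclideanSpace ℝ (Fin n)) :
    (inner ℝ ((Matrix.toEuclideanLin M) w) w : ℝ) =
      M.mulVec ((WithLp.equiv 2 (Fin n → ℝ)) w) ⬝ᵥ ((WithLp.equiv 2 (Fin n → ℝ)) w) := by
  have := inner_symm_eq M ((WithLp.equiv 2 (Fin n → ℝ)) w)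
  simpa using this

lemma norm_sq_eq' (w : EuclideanSpace ℝ (Fin n)) :
    ‖w‖ ^ 2 = ((WithLp.equiv 2 (Fin n → ℝ)) w) ⬝ᵥ ((WithLp.equiv 2 (Fin n → ℝ)) w) := by
  have := norm_symm_sq ((WithLp.equiv 2 (Fin n → ℝ)) w)
  simpa using this

lemma exists_nonneg_eigvec (hn : 0 < n) (M : Matrix (Fin n) (Fin n) ℝ) (hM : M.IsHermitian)
    (hpos : ∀ i j, 0 ≤ M i j) {μ : ℝ} (hmax : IsMaxAdjEigenvalue M μ) :
    ∃ y : Fin n → ℝ, (∀ i, 0 ≤ y i) ∧ y ⬝ᵥ y = 1 ∧ M.mulVec y = μ • y := by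
  classical
  obtain ⟨z, hz0, hzeq⟩ := hmax.1
  have hQz : M.mulVec z ⬝ᵥ z = μ * (z ⬝ᵥ z) := by
    rw [hzeq, smul_dotProduct, smul_eq_mul]
  have hzz : 0 < z ⬝ᵥ z := by
    obtain ⟨i, hi⟩ := Function.ne_iff.mp hz0
    simp only [Pi.zero_apply] at hi
    unfold dotProduct
    exact Finset.sum_pos' (fun j _ => mul_self_nonneg _)
      ⟨i, Finset.mem_univ i, mul_self_pos.mpr hi⟩
  set a : Fin n → ℝ := fun i => |z i| with ha
  have haa : a ⬝ᵥ a = z ⬝ᵥ z := by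
    unfold dotProduct
    exact Finset.sum_congr rfl fun i _ => abs_mul_abs_self _
  have expand : ∀ x : Fin n → ℝ, M.mulVec x ⬝ᵥ x = ∑ i, (∑ j, M i j * x j) * x i := by
    intro x; simp [Matrix.mulVec, dotProduct]
  have hQa_ge : M.mulVec z ⬝ᵥ z ≤ M.mulVec a ⬝ᵥ a := by
    rw [expand, expand]
    refine Finset.sum_le_sum fun i _ => ?_
    have h2 : |∑ j, M i j * z j| ≤ ∑ j, M i j * |z j| := by
      refine (Finset.abs_sum_le_sum_abs _ _).trans (Finset.sum_le_sum fun j _ => ?_)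
      rw [abs_mul, abs_of_nonneg (hpos i j)]
    calc (∑ j, M i j * z j) * z i ≤ |(∑ j, M i j * z j) * z i| := le_abs_self _
      _ = |∑ j, M i j * z j| * |z i| := abs_mul _ _
      _ ≤ (∑ j, M i j * |z j|) * |z i| :=
          mul_le_mul_of_nonneg_right h2 (abs_nonneg _)
  have hQa_le : M.mulVec a ⬝ᵥ a ≤ μ * (z ⬝ᵥ z) := by
    have := rayleigh_le hn M hM hmax a
    rwa [haa] at this
  have hQa : M.mulVec a ⬝ᵥ a = μ * (z ⬝ᵥ z) := le_antisymm hQa_le (hQz ▸ hQa_ge)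
  set c : ℝ := Real.sqrt (z ⬝ᵥ z) with hc
  have hcpos : 0 < c := Real.sqrt_pos.mpr hzz
  have hc2 : c * c = z ⬝ᵥ z := Real.mul_self_sqrt hzz.le
  set y : Fin n → ℝ := fun i => a i / c with hy
  have hy_nonneg : ∀ i, 0 ≤ y i := fun i => div_nonneg (abs_nonneg _) hcpos.le
  have hysmul : y = c⁻¹ • a := by
    funext i; simp [hy, div_eq_inv_mul]
  have hyy : y ⬝ᵥ y = 1 := by
    rw [hysmul, smul_dotProduct, dotProduct_smul, haa, smul_eq_mul, smul_eq_mul]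
    field_simp [← hc2]
    rw [sq, hc2]
  have hQy : M.mulVec y ⬝ᵥ y = μ := by
    rw [hysmul, Matrix.mulVec_smul, smul_dotProduct, dotProduct_smul, hQa,
      smul_eq_mul, smul_eq_mul]
    field_simp [← hc2]
    rw [sq, hc2, mul_comm]
  -- Euclidean setup
  set T := Matrix.toEuclideanLin M with hT
  have hsym : T.IsSymmetric := Matrix.isHermitian_iff_isSymmetric.mp hM
  set T' : EuclideanSpace ℝ (Fin n) →L[ℝ] EuclideanSpace ℝ (Fin n) :=
    LinearMap.toContinuousLinearMap T with hT'
  have hTcoe : (T' : EuclideanSpace ℝ (Fin n) →ₗ[ℝ] EuclideanSpace ℝ (Fin n)) = T :=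
    LinearMap.coe_toContinuousLinearMap T
  have hsa : IsSelfAdjoint T' := by
    rw [ContinuousLinearMap.isSelfAdjoint_iff_isSymmetric, hTcoe]
    exact hsym
  set y' : EuclideanSpace ℝ (Fin n) := (WithLp.equiv 2 (Fin n → ℝ)).symm y with hy'
  have hequiv_y' : (WithLp.equiv 2 (Fin n → ℝ)) y' = y := by simp [hy']
  have hy'norm2 : ‖y'‖ ^ 2 = 1 := by rw [norm_symm_sq, hyy]
  have hy'norm : ‖y'‖ = 1 := by
    nlinarith [norm_nonneg y', hy'norm2, sq_nonneg (‖y'‖ - 1), sq_nonneg (‖y'‖ + 1)]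
  have hy'0 : y' ≠ 0 := by
    intro h0; rw [h0] at hy'norm; simp at hy'norm
  have happly : ∀ w : EuclideanSpace ℝ (Fin n), T' w = T w := by
    intro w; rw [hT', LinearMap.coe_toContinuousLinearMap']
  have hmaxOn : IsMaxOn T'.reApplyInnerSelf (Metric.sphere (0 : EuclideanSpace ℝ (Fin n)) ‖y'‖) y' := by
    intro w hw
    have hwnorm : ‖w‖ = ‖y'‖ := by simpa using hw
    have h1 : T'.reApplyInnerSelf w = M.mulVec ((WithLp.equiv 2 (Fin n → ℝ)) w) ⬝ᵥ
        ((WithLp.equiv 2 (Fin n → ℝ)) w) := by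
      rw [ContinuousLinearMap.reApplyInnerSelf, happly, ← inner_eq' M w]
      simp [hT]
    have h2 : T'.reApplyInnerSelf y' = μ := by
      rw [ContinuousLinearMap.reApplyInnerSelf, happly, ← hQy]
      have := inner_eq' M y'
      rw [hequiv_y'] at this
      simp [hT, this]
    rw [Set.mem_setOf_eq, h1, h2]
    calc M.mulVec ((WithLp.equiv 2 (Fin n → ℝ)) w) ⬝ᵥ ((WithLp.equiv 2 (Fin n → ℝ)) w)
        ≤ μ * (((WithLp.equiv 2 (Fin n → ℝ)) w) ⬝ᵥ ((WithLp.equiv 2 (Fin n → ℝ)) w)) :=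
          rayleigh_le hn M hM hmax _
      _ = μ := by rw [← norm_sq_eq', hwnorm, hy'norm2, mul_one]
  have hev := hsa.hasEigenvector_of_isMaxOn hy'0 hmaxOn
  obtain ⟨hmem, -⟩ := hev
  rw [Module.End.mem_eigenspace_iff, hTcoe] at hmem
  -- hmem : T y' = r • y'
  set r : ℝ := (⨆ x : { x : EuclideanSpace ℝ (Fin n) // x ≠ 0 }, T'.rayleighQuotient x) with hr
  have hmv : M.mulVec y = r • y := by
    have := congrArg (WithLp.equiv 2 (Fin n → ℝ)) hmem
    rw [WithLp.equiv_apply, Matrix.ofLp_toEuclideanLin_apply, ← WithLp.equiv_apply, hequiv_y'] at this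
    rw [this, WithLp.equiv_apply, WithLp.ofLp_smul, ← WithLp.equiv_apply, hequiv_y']
    norm_num
  have hrμ : r = μ := by
    have : M.mulVec y ⬝ᵥ y = r * (y ⬝ᵥ y) := by
      rw [hmv, smul_dotProduct, smul_eq_mul]
    rw [hyy, mul_one, hQy] at this
    exact this.symm
  exact ⟨y, hy_nonneg, hyy, by rwa [hrμ] at hmv⟩


section AdjLemmas

open Matrix

variable {n : ℕ}

lemma adjMat_isHermitian {m : ℕ} (G : SimpleGraph (Fin m)) : (adjMat G).IsHermitian := by
  ext i j
  simp only [adjMat, Matrix.conjTranspose_apply, Matrix.of_apply, star_trivial]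
  rw [SimpleGraph.adj_comm]

lemma adjMat_nonneg {m : ℕ} (G : SimpleGraph (Fin m)) (i j : Fin m) : 0 ≤ adjMat G i j := by
  simp only [adjMat, Matrix.of_apply]
  split <;> norm_num

lemma adjMat_walk_bound {m : ℕ} {H : SimpleGraph (Fin m)} {y : Fin m → ℝ} {μ : ℝ}
    (hμ0 : 0 ≤ μ) (hstep : ∀ a b : Fin m, H.Adj a b → y b ≤ μ * y a) :
    ∀ {a b : Fin m} (W : H.Walk a b), y b ≤ μ ^ W.length * y a := by
  intro a b W
  induction W with
  | nil => simp
  | @cons a c b h p ih =>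
    calc y b ≤ μ ^ p.length * y c := ih
      _ ≤ μ ^ p.length * (μ * y a) :=
          mul_le_mul_of_nonneg_left (hstep a c h) (pow_nonneg hμ0 _)
      _ = μ ^ (SimpleGraph.Walk.cons h p).length * y a := by
          rw [SimpleGraph.Walk.length_cons, pow_succ]; ring

lemma adjMat_one_le_max {m : ℕ} (hm : 0 < m) {H : SimpleGraph (Fin m)} {a c : Fin m}
    (hac : H.Adj a c) {μ : ℝ} (hmax : IsMaxAdjEigenvalue (adjMat H) μ) : 1 ≤ μ := by
  classical
  set x : Fin m → ℝ := fun i => if i = a ∨ i = c then (1:ℝ) else 0 with hx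
  have hxnn : ∀ i, 0 ≤ x i := by intro i; simp only [hx]; split <;> norm_num
  have hne : a ≠ c := hac.ne
  have hxx : x ⬝ᵥ x = 2 := by
    unfold dotProduct
    have : ∀ i, x i * x i = (if i = a then (1:ℝ) else 0) + (if i = c then (1:ℝ) else 0) := by
      intro i
      by_cases h1 : i = a
      · subst h1; simp [hx, hne, hne.symm]
      · by_cases h2 : i = c
        · subst h2; simp [hx, h1, hne.symm]
        · simp [hx, h1, h2]
    rw [Finset.sum_congr rfl fun i _ => this i, Finset.sum_add_distrib]
    simp only [Finset.sum_ite_eq', Finset.mem_univ, if_true]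
    norm_num
  have hmv : ∀ i, (adjMat H).mulVec x i = ∑ j, adjMat H i j * x j := fun i => rfl
  have hQ : (2:ℝ) ≤ (adjMat H).mulVec x ⬝ᵥ x := by
    have hxa : x a = 1 := by simp [hx]
    have hxc : x c = 1 := by simp [hx]
    have hBac : adjMat H a c = 1 := by simp [adjMat, hac]
    have hBca : adjMat H c a = 1 := by simp [adjMat, hac.symm]
    have hf : ∀ i, 0 ≤ (adjMat H).mulVec x i * x i := by
      intro i
      rw [hmv i]
      exact mul_nonneg (Finset.sum_nonneg fun j _ => mul_nonneg (adjMat_nonneg H i j) (hxnn j))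
        (hxnn i)
    have hfa : (1:ℝ) ≤ (adjMat H).mulVec x a * x a := by
      rw [hxa, mul_one, hmv a]
      calc (1:ℝ) = adjMat H a c * x c := by rw [hBac, hxc]; norm_num
        _ ≤ ∑ j, adjMat H a j * x j :=
            Finset.single_le_sum (f := fun j => adjMat H a j * x j)
              (fun j _ => mul_nonneg (adjMat_nonneg H a j) (hxnn j)) (Finset.mem_univ c)
        _ = (adjMat H).mulVec x a := (hmv a).symm
    have hfc : (1:ℝ) ≤ (adjMat H).mulVec x c * x c := by
      rw [hxc, mul_one, hmv c]
      calc (1:ℝ) = adjMat H c a * x a := by rw [hBca, hxa]; norm_num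
        _ ≤ ∑ j, adjMat H c j * x j :=
            Finset.single_le_sum (f := fun j => adjMat H c j * x j)
              (fun j _ => mul_nonneg (adjMat_nonneg H c j) (hxnn j)) (Finset.mem_univ a)
        _ = (adjMat H).mulVec x c := (hmv c).symm
    calc (2:ℝ) ≤ (adjMat H).mulVec x a * x a + (adjMat H).mulVec x c * x c := by linarith
      _ = ∑ i ∈ ({a, c} : Finset (Fin m)), (adjMat H).mulVec x i * x i :=
          (Finset.sum_pair (f := fun i => (adjMat H).mulVec x i * x i) hne).symm
      _ ≤ ∑ i, (adjMat H).mulVec x i * x i :=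
          Finset.sum_le_sum_of_subset_of_nonneg (Finset.subset_univ _) fun i _ _ => hf i
      _ = (adjMat H).mulVec x ⬝ᵥ x := rfl
  have := rayleigh_le hm (adjMat H) (adjMat_isHermitian H) hmax x
  rw [hxx] at this
  linarith

end AdjLemmas


open Matrix in
lemma adjMat_delete_quad {m : ℕ} (G : SimpleGraph (Fin m)) {u v : Fin m} (huv : G.Adj u v)
    (y : Fin m → ℝ) :
    (adjMat G).mulVec y ⬝ᵥ y =
      (adjMat (G.deleteEdges {s(u, v)})).mulVec y ⬝ᵥ y + 2 * (y u * y v) := by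
  classical
  set B := adjMat (G.deleteEdges {s(u, v)}) with hB
  have hne : u ≠ v := huv.ne
  have hAB : ∀ i j, adjMat G i j =
      B i j + (if (i = u ∧ j = v) ∨ (i = v ∧ j = u) then (1:ℝ) else 0) := by
    intro i j
    by_cases hc : (i = u ∧ j = v) ∨ (i = v ∧ j = u)
    · have hadj : G.Adj i j := by
        rcases hc with ⟨h1, h2⟩ | ⟨h1, h2⟩
        · rw [h1, h2]; exact huv
        · rw [h1, h2]; exact huv.symm
      have hs : s(i, j) = s(u, v) := by
        rcases hc with ⟨h1, h2⟩ | ⟨h1, h2⟩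
        · rw [h1, h2]
        · rw [h1, h2]; exact Sym2.eq_swap
      have hB0 : B i j = 0 := by
        simp only [hB, adjMat, Matrix.of_apply, SimpleGraph.deleteEdges_adj,
          Set.mem_singleton_iff]
        rw [if_neg (fun h => h.2 hs)]
      have hA1 : adjMat G i j = 1 := by simp [adjMat, hadj]
      rw [hA1, hB0, if_pos hc]; norm_num
    · have hs : ¬ s(i, j) = s(u, v) := by
        rw [Sym2.eq_iff]; tauto
      have hBA : B i j = adjMat G i j := by
        simp only [hB, adjMat, Matrix.of_apply, SimpleGraph.deleteEdges_adj,
          Set.mem_singleton_iff]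
        rw [if_congr (and_iff_left hs) rfl rfl]
      rw [hBA, if_neg hc]; norm_num
  have hE : ∀ i, (∑ j, (if (i = u ∧ j = v) ∨ (i = v ∧ j = u) then (1:ℝ) else 0) * y j) =
      (if i = u then y v else 0) + (if i = v then y u else 0) := by
    intro i
    by_cases hiu : i = u
    · have hiv : ¬ i = v := fun h => hne (hiu.symm.trans h)
      have hp : ∀ j, (if (i = u ∧ j = v) ∨ (i = v ∧ j = u) then (1:ℝ) else 0) * y j =
          if j = v then y j else 0 := by
        intro j
        by_cases h : j = v
        · rw [if_pos (Or.inl ⟨hiu, h⟩), if_pos h, one_mul]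
        · rw [if_neg ?_, if_neg h, zero_mul]
          rintro (⟨-, h2⟩ | ⟨h2, -⟩)
          · exact h h2
          · exact hiv h2
      rw [Finset.sum_congr rfl fun j _ => hp j, Finset.sum_ite_eq' Finset.univ v y,
        if_pos (Finset.mem_univ v), if_pos hiu, if_neg hiv, add_zero]
    · by_cases hiv : i = v
      · have hp : ∀ j, (if (i = u ∧ j = v) ∨ (i = v ∧ j = u) then (1:ℝ) else 0) * y j =
            if j = u then y j else 0 := by
          intro j
          by_cases h : j = u
          · rw [if_pos (Or.inr ⟨hiv, h⟩), if_pos h, one_mul]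
          · rw [if_neg ?_, if_neg h, zero_mul]
            rintro (⟨h2, -⟩ | ⟨-, h2⟩)
            · exact hiu h2
            · exact h h2
        rw [Finset.sum_congr rfl fun j _ => hp j, Finset.sum_ite_eq' Finset.univ u y,
          if_pos (Finset.mem_univ u), if_pos hiv, if_neg hiu, zero_add]
      · have hp : ∀ j, (if (i = u ∧ j = v) ∨ (i = v ∧ j = u) then (1:ℝ) else 0) * y j = 0 := by
          intro j
          rw [if_neg ?_, zero_mul]
          rintro (⟨h2, -⟩ | ⟨h2, -⟩)
          · exact hiu h2
          · exact hiv h2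
        rw [Finset.sum_congr rfl fun j _ => hp j, if_neg hiu, if_neg hiv]
        simp
  have hmv : ∀ i, (adjMat G).mulVec y i =
      B.mulVec y i + ((if i = u then y v else 0) + (if i = v then y u else 0)) := by
    intro i
    have h1 : (adjMat G).mulVec y i = ∑ j, adjMat G i j * y j := rfl
    have h2 : B.mulVec y i = ∑ j, B i j * y j := rfl
    rw [h1, h2, ← hE i, ← Finset.sum_add_distrib]
    refine Finset.sum_congr rfl fun j _ => ?_
    rw [hAB i j]; ring
  have hd1 : (adjMat G).mulVec y ⬝ᵥ y = ∑ i, (adjMat G).mulVec y i * y i := rfl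
  have hd2 : B.mulVec y ⬝ᵥ y = ∑ i, B.mulVec y i * y i := rfl
  rw [hd1, hd2]
  rw [Finset.sum_congr rfl fun i _ => by rw [hmv i]]
  have expand : ∀ i, (B.mulVec y i + ((if i = u then y v else 0) + (if i = v then y u else 0))) * y i
      = B.mulVec y i * y i + ((if i = u then y v * y i else 0) + (if i = v then y u * y i else 0)) := by
    intro i
    by_cases h1 : i = u
    · rw [if_pos h1, if_pos h1]
      by_cases h2 : i = v
      · exact absurd (h1.symm.trans h2) hne
      · rw [if_neg h2, if_neg h2]; ring
    · rw [if_neg h1, if_neg h1]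
      by_cases h2 : i = v
      · rw [if_pos h2, if_pos h2]; ring
      · rw [if_neg h2, if_neg h2]; ring
  rw [Finset.sum_congr rfl fun i _ => expand i, Finset.sum_add_distrib, Finset.sum_add_distrib,
    Finset.sum_ite_eq', Finset.sum_ite_eq']
  simp only [Finset.mem_univ, if_true]
  ring

theorem stmt6 {n : ℕ} (G : SimpleGraph (Fin n)) (hG : G.Connected)
    (D : ℕ) (hD1 : ∀ u v, G.dist u v ≤ D) (hD2 : ∃ u v, G.dist u v = D)
    (u v : Fin n) (huv : G.Adj u v)
    (hH : (G.deleteEdges {s(u, v)}).Connected)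
    (μG μH : ℝ) (hmaxG : IsMaxAdjEigenvalue (adjMat G) μG)
    (hmaxH : IsMaxAdjEigenvalue (adjMat (G.deleteEdges {s(u, v)})) μH) :
    μG - μH > 2 / (μG ^ (2 * D) * n) := by
  classical
  set H := G.deleteEdges {s(u, v)} with hHdef
  have hne : u ≠ v := huv.ne
  have hn2 : 2 ≤ n := by
    have h1 : (u : ℕ) < n := u.2
    have h2 : (v : ℕ) < n := v.2
    have h3 : (u : ℕ) ≠ (v : ℕ) := fun h => hne (Fin.ext h)
    omega
  have hn : 0 < n := by omega
  have hnR : (0:ℝ) < n := by exact_mod_cast hn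
  -- D ≥ 1
  have hDpos : 1 ≤ D := by
    have := hG.pos_dist_of_ne hne
    have := hD1 u v
    omega
  -- the nonnegative Perron eigenvector of H
  obtain ⟨y, hy_nonneg, hyy, heig⟩ :=
    exists_nonneg_eigvec hn (adjMat H) (adjMat_isHermitian H)
      (adjMat_nonneg H) hmaxH
  -- an H-edge to show μH ≥ 1
  have hμH1 : 1 ≤ μH := by
    obtain ⟨W, hW⟩ := (hH.preconnected u v).exists_walk_length_eq_dist
    cases W with
    | nil => exact absurd rfl hne
    | cons h p => exact adjMat_one_le_max hn h hmaxH
  have hμH0 : 0 ≤ μH := by linarith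
  -- eigen step inequality
  have hstep : ∀ a b : Fin n, H.Adj a b → y b ≤ μH * y a := by
    intro a b hab
    have h1 : (adjMat H).mulVec y a = μH * y a := by
      rw [heig]; simp
    have hBab : adjMat H a b = 1 := by simp [adjMat, hab]
    calc y b = adjMat H a b * y b := by rw [hBab]; ring
      _ ≤ ∑ j, adjMat H a j * y j :=
          Finset.single_le_sum (f := fun j => adjMat H a j * y j)
            (fun j _ => mul_nonneg (adjMat_nonneg H a j) (hy_nonneg j)) (Finset.mem_univ b)
      _ = (adjMat H).mulVec y a := rfl
      _ = μH * y a := h1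
  -- max coordinate
  obtain ⟨w, -, hw⟩ := Finset.exists_max_image Finset.univ y ⟨u, Finset.mem_univ u⟩
  have hwmax : ∀ i, y i ≤ y w := fun i => hw i (Finset.mem_univ i)
  have hyw : 0 < y w := by
    rcases lt_or_ge 0 (y w) with h | h
    · exact h
    · exfalso
      have hall : ∀ i, y i = 0 := fun i => le_antisymm ((hwmax i).trans h) (hy_nonneg i)
      rw [show y ⬝ᵥ y = ∑ i, y i * y i from rfl] at hyy
      simp [hall] at hyy
  have hnyw : 1 ≤ (n:ℝ) * y w ^ 2 := by
    have h1 : (1:ℝ) = ∑ i, y i * y i := by rw [← hyy]; rfl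
    have h2 : ∑ i, y i * y i ≤ ∑ _i : Fin n, y w * y w :=
      Finset.sum_le_sum fun i _ =>
        mul_le_mul (hwmax i) (hwmax i) (hy_nonneg i) hyw.le
    rw [Finset.sum_const, Finset.card_univ, Fintype.card_fin, nsmul_eq_mul] at h2
    nlinarith
  -- walk bounds
  have hwalku : y w ≤ μH ^ (H.dist w u) * y u := by
    obtain ⟨W, hW⟩ := (hH.preconnected u w).exists_walk_length_eq_dist
    have := adjMat_walk_bound hμH0 hstep W
    rw [hW, SimpleGraph.dist_comm] at this
    exact this
  have hwalkv : y w ≤ μH ^ (H.dist w v) * y v := by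
    obtain ⟨W, hW⟩ := (hH.preconnected v w).exists_walk_length_eq_dist
    have := adjMat_walk_bound hμH0 hstep W
    rw [hW, SimpleGraph.dist_comm] at this
    exact this
  have hsum : H.dist w u + H.dist w v ≤ 2 * D := dist_sum_le hG hD1 hH w
  -- positivity of y u, y v
  have hyu : 0 < y u := by
    by_contra h
    push_neg at h
    have hp : 0 ≤ μH ^ (H.dist w u) := pow_nonneg hμH0 _
    nlinarith
  have hyv : 0 < y v := by
    by_contra h
    push_neg at h
    have hp : 0 ≤ μH ^ (H.dist w v) := pow_nonneg hμH0 _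
    nlinarith
  -- Rayleigh comparison
  have hQB : (adjMat H).mulVec y ⬝ᵥ y = μH := by
    rw [heig, smul_dotProduct, smul_eq_mul, hyy, mul_one]
  have hQA : (adjMat G).mulVec y ⬝ᵥ y = μH + 2 * (y u * y v) := by
    rw [adjMat_delete_quad G huv y, ← hHdef, hQB]
  have hQle : (adjMat G).mulVec y ⬝ᵥ y ≤ μG := by
    have := rayleigh_le hn (adjMat G) (adjMat_isHermitian G) hmaxG y
    rwa [hyy, mul_one] at this
  have hgap : 2 * (y u * y v) ≤ μG - μH := by
    rw [hQA] at hQle; linarith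
  have hμGH : μH < μG := by nlinarith
  have hμG0 : 0 < μG := by linarith
  -- product bound
  have hprod : y w ^ 2 ≤ μH ^ (2 * D) * (y u * y v) := by
    have h1 : y w * y w ≤ (μH ^ (H.dist w u) * y u) * (μH ^ (H.dist w v) * y v) :=
      mul_le_mul hwalku hwalkv hyw.le
        (mul_nonneg (pow_nonneg hμH0 _) (hy_nonneg u))
    have h2 : (μH ^ (H.dist w u) * y u) * (μH ^ (H.dist w v) * y v) =
        μH ^ (H.dist w u + H.dist w v) * (y u * y v) := by
      rw [pow_add]; ring
    have h3 : μH ^ (H.dist w u + H.dist w v) ≤ μH ^ (2 * D) :=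
      pow_le_pow_right₀ hμH1 hsum
    nlinarith [mul_pos hyu hyv]
  have hlt : μH ^ (2 * D) < μG ^ (2 * D) :=
    pow_lt_pow_left₀ hμGH hμH0 (by omega)
  have hden : (0:ℝ) < μG ^ (2 * D) * n := by positivity
  rw [gt_iff_lt, div_lt_iff₀ hden]
  have hyuv : 0 < y u * y v := mul_pos hyu hyv
  have h4 : μH ^ (2 * D) * (y u * y v) < μG ^ (2 * D) * (y u * y v) :=
    mul_lt_mul_of_pos_right hlt hyuv
  have h5 : y w ^ 2 < μG ^ (2 * D) * (y u * y v) := lt_of_le_of_lt hprod h4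
  have h6 : 1 < (n:ℝ) * (μG ^ (2 * D) * (y u * y v)) := by nlinarith
  nlinarith [mul_le_mul_of_nonneg_right hgap hden.le]
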